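/- Let (Ω,T) be a minimal subshift over a finite alphabet A with associated set of words W, let B be a Banach space, and let f: Ω → B be continuous. For ω ∈ Ω and w ∈ W, let k_ω^w be the minimal nonnegative integer k with ω_k ω_{k+1} ⋯ ω_{k+|w|−1} = w (which exists by minimality), and set F_ω(w) = Σ_{j=0}^{|w|−1} f(T^{k_ω^w + j} ω). Then for every ε > 0 there exists l such that ‖F_ω(w) − F_ρ(w)‖ ≤ ε|w| for all ω, ρ ∈ Ω and all w ∈ W with |w| ≥ l; equivalently, there is a nonincreasing function c: [0,∞) → [0,∞) with c(r) → 0 as r → ∞ such that ‖F_ω(w) − F_ρ(w)‖ ≤ c(|w|)|w| for all ω, ρ ∈ Ω and w ∈ W. -/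

import Mathlib

open Filter Topology

namespace SubshiftErgodic

variable {A : Type*}

/-- The shift map `T` on two-sided sequences over `A`: `(T ω) n = ω (n+1)`. -/
def shift (ω : ℤ → A) : ℤ → A := fun n => ω (n + 1)

/-- The `n`-th power of the shift: `(shiftZ n ω) k = ω (k + n)`. -/
def shiftZ (n : ℤ) (ω : ℤ → A) : ℤ → A := fun k => ω (k + n)

/-- `Ω` is a subshift: a closed, shift-invariant subset of `A^ℤ`. -/
def IsSubshift [TopologicalSpace A] (Ω : Set (ℤ → A)) : Prop :=
  IsClosed Ω ∧ shift '' Ω = Ω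

/-- Minimality: every orbit `{T^n ω : n ∈ ℤ}` is dense in `Ω`. -/
def IsMinimal [TopologicalSpace A] (Ω : Set (ℤ → A)) : Prop :=
  ∀ ω ∈ Ω, Ω ⊆ closure {ρ | ∃ n : ℤ, ρ = shiftZ n ω}

/-- The finite word `w` occurs in the sequence `ω` at position `k`. -/
def OccursAt (w : List A) (ω : ℤ → A) (k : ℤ) : Prop :=
  ∀ i : Fin w.length, ω (k + (i : ℕ)) = w.get i

/-- The set `W = W(Ω)` of finite words occurring as factors of elements of `Ω`. -/
def words (Ω : Set (ℤ → A)) : Set (List A) :=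
  {w | ∃ ω ∈ Ω, ∃ k : ℤ, OccursAt w ω k}

/-- `v` occurs as a factor of the finite word `w` at position `i`. -/
def OccursIn (v w : List A) (i : ℕ) : Prop :=
  i + v.length ≤ w.length ∧ v <+: w.drop i

/-- `♯_v(w)`: the number of occurrences of `v` as a factor of `w`. -/
noncomputable def occ (v w : List A) : ℕ :=
  {i : ℕ | OccursIn v w i}.ncard

/-- `z` is a return word of `u` (relative to the set of words `W`). -/
def IsReturnWord (W : Set (List A)) (z u : List A) : Prop :=
  z ∈ W ∧ z ++ u ∈ W ∧ occ u (z ++ u) = 2 ∧ u <+: z ++ u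

/-- The maximal number of pairwise disjoint occurrences of `v` as a factor of `w`. -/
noncomputable def maxDisjoint (v w : List A) : ℕ :=
  sSup {m : ℕ | ∃ s : Fin m → ℕ, (∀ i, OccursIn v w (s i)) ∧
    ∀ i j : Fin m, i < j → s i + v.length ≤ s j}

/-- The filter expressing `|w| → ∞` along words `w ∈ W`. -/
def wordsFilter (W : Set (List A)) : Filter (List A) :=
  ⨅ L : ℕ, Filter.principal {w | w ∈ W ∧ L ≤ w.length}

/-- `lim_{|w| → ∞} g w = x` over `w ∈ W`: for every `ε > 0` there is `L` with
`‖g w - x‖ ≤ ε` for all `w ∈ W` with `|w| ≥ L`. -/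
def TendstoWords {B : Type*} [SeminormedAddCommGroup B] (W : Set (List A))
    (g : List A → B) (x : B) : Prop :=
  ∀ ε : ℝ, 0 < ε → ∃ L : ℕ, ∀ w ∈ W, L ≤ w.length → ‖g w - x‖ ≤ ε

/-- `liminf_{|w| → ∞} g w` over `w ∈ W`, valued in the extended reals. -/
noncomputable def liminfWords (W : Set (List A)) (g : List A → ℝ) : EReal :=
  Filter.liminf (fun w => (g w : EReal)) (wordsFilter W)

/-- `limsup_{|w| → ∞} g w` over `w ∈ W`, valued in the extended reals. -/
noncomputable def limsupWords (W : Set (List A)) (g : List A → ℝ) : EReal :=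
  Filter.limsup (fun w => (g w : EReal)) (wordsFilter W)

/-- `ν(v) = liminf_{|w| → ∞} l_v(w)/|w|`, where
`l_v(w) = (max number of pairwise disjoint copies of v in w) ⬝ |v|`. -/
noncomputable def nu (W : Set (List A)) (v : List A) : EReal :=
  liminfWords W (fun w => ((maxDisjoint v w * v.length : ℕ) : ℝ) / (w.length : ℝ))

/-- Condition (PQ): uniform positivity of quasiweights. -/
def PQ (W : Set (List A)) : Prop :=
  ∃ C : ℝ, 0 < C ∧ ∀ v ∈ W, v ≠ [] → (C : EReal) ≤ nu W v

/-- Unique ergodicity: all word frequencies `♯_v(w)/|w|` converge as `|w| → ∞`. -/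
def UniquelyErgodic (Ω : Set (ℤ → A)) : Prop :=
  ∀ v ∈ words Ω, ∃ x : ℝ,
    TendstoWords (words Ω) (fun w => (occ v w : ℝ) / (w.length : ℝ)) x

/-- `F : W → ℝ` is subadditive. -/
def IsSubadditive (W : Set (List A)) (F : List A → ℝ) : Prop :=
  ∀ a b : List A, a ∈ W → b ∈ W → a ++ b ∈ W → F (a ++ b) ≤ F a + F b

/-- `F^(n) = max { F v / |v| : v ∈ W, |v| = n }`. -/
noncomputable def wordSup (W : Set (List A)) (F : List A → ℝ) (n : ℕ) : ℝ :=
  sSup ((fun v => F v / (v.length : ℝ)) '' {v | v ∈ W ∧ v.length = n})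

/-- Condition (SET): the uniform subadditive ergodic theorem holds, i.e. for every
subadditive `F` the limit `lim_{|w|→∞} F(w)/|w|` exists and equals `inf_{n ≥ 1} F^(n)`
(in the extended reals). -/
def SET (W : Set (List A)) : Prop :=
  ∀ F : List A → ℝ, IsSubadditive W F →
    Filter.Tendsto (fun w => ((F w / (w.length : ℝ) : ℝ) : EReal)) (wordsFilter W)
      (nhds (⨅ n : {n : ℕ // 1 ≤ n}, ((wordSup W F n.1 : ℝ) : EReal)))

/-- A Banach-space-valued function `F : W → B` is additive. -/
def IsAdditive {B : Type*} [SeminormedAddCommGroup B] (W : Set (List A))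
    (F : List A → B) : Prop :=
  ∃ D : ℝ, 0 < D ∧ ∃ c : ℕ → ℝ, Antitone c ∧ (∀ n, 0 ≤ c n) ∧
    Filter.Tendsto c Filter.atTop (nhds 0) ∧
    (∀ vs : List (List A), (∀ v ∈ vs, v ∈ W) → vs.flatten ∈ W →
      ‖F vs.flatten - (vs.map F).sum‖ ≤ (vs.map fun v => c v.length * (v.length : ℝ)).sum) ∧
    ∀ v ∈ W, ‖F v‖ ≤ D * (v.length : ℝ)

/-- Condition (HP): powers in `W` have uniformly bounded exponent. -/
def HP (W : Set (List A)) : Prop :=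
  ∃ N : ℕ, 0 < N ∧ ∀ v : List A, v ≠ [] → ∀ k : ℕ,
    (List.replicate k v).flatten ∈ W → k ≤ N

/-- Condition (PW): uniform positivity of weights. -/
def PW (W : Set (List A)) : Prop :=
  ∃ E : ℝ, 0 < E ∧ ∀ v ∈ W, v ≠ [] →
    (E : EReal) ≤ liminfWords W (fun w => ((occ v w * v.length : ℕ) : ℝ) / (w.length : ℝ))

/-- Linear repetitivity. -/
def LinearlyRepetitive (W : Set (List A)) : Prop :=
  ∃ D : ℝ, 0 < D ∧ ∀ v ∈ W, v ≠ [] → ∀ w ∈ W, D * (v.length : ℝ) ≤ (w.length : ℝ) →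
    v <:+: w

/-- Aperiodicity: no element of `Ω` is periodic. -/
def Aperiodic (Ω : Set (ℤ → A)) : Prop :=
  ∀ ω ∈ Ω, ∀ p : ℕ, 1 ≤ p → shiftZ (p : ℤ) ω ≠ ω

/-- `m(n)`: the minimal length of a return word of a word of length `n` in `W`. -/
noncomputable def mRet (W : Set (List A)) (n : ℕ) : ℕ :=
  sInf {k : ℕ | ∃ v z : List A, v ∈ W ∧ v.length = n ∧ IsReturnWord W z v ∧ z.length = k}

/-- `k_ω^w`: the minimal nonnegative position at which `w` occurs in `ω`. -/
noncomputable def firstOcc (ω : ℤ → A) (w : List A) : ℕ :=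
  sInf {k : ℕ | OccursAt w ω (k : ℤ)}

/-- `F_ω(w) = ∑_{j=0}^{|w|-1} f(T^{k_ω^w + j} ω)`. -/
noncomputable def birkhoffF {B : Type*} [AddCommMonoid B] (f : (ℤ → A) → B)
    (ω : ℤ → A) (w : List A) : B :=
  ∑ j ∈ Finset.range w.length, f (shiftZ ((firstOcc ω w : ℤ) + (j : ℤ)) ω)


section Aux

lemma shift_eq_shiftZ_one : (shift : (ℤ → A) → (ℤ → A)) = shiftZ 1 := by
  funext ω n; rfl

lemma shiftZ_shiftZ (a b : ℤ) (ω : ℤ → A) :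
    shiftZ a (shiftZ b ω) = shiftZ (b + a) ω := by
  funext k; simp only [shiftZ]; ring_nf

lemma shiftZ_mem [TopologicalSpace A] {Ω : Set (ℤ → A)} (hΩ : IsSubshift Ω)
    (n : ℤ) {ω : ℤ → A} (hω : ω ∈ Ω) : shiftZ n ω ∈ Ω := by
  have hfwd : ∀ σ ∈ Ω, shiftZ 1 σ ∈ Ω := by
    intro σ hσ
    rw [← shift_eq_shiftZ_one, ← hΩ.2]
    exact Set.mem_image_of_mem _ hσ
  have hbwd : ∀ σ ∈ Ω, shiftZ (-1) σ ∈ Ω := by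
    intro σ hσ
    have : σ ∈ shift '' Ω := by rw [hΩ.2]; exact hσ
    obtain ⟨τ, hτ, hτσ⟩ := this
    have : shiftZ (-1) σ = τ := by
      funext m
      have := congrFun hτσ (m - 1)
      simpa [shift, shiftZ, sub_eq_add_neg] using this.symm
    rwa [this]
  induction n using Int.induction_on with
  | zero =>
      have e : shiftZ (0:ℤ) ω = ω := by funext k; simp [shiftZ]
      rwa [e]
  | succ k ih =>
      have := hfwd _ ih
      rwa [shiftZ_shiftZ] at this
  | pred k ih =>
      have := hbwd _ ih
      rw [shiftZ_shiftZ] at this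
      rwa [show ((-(k:ℤ)) + -1) = (-(k:ℤ) - 1) from by ring] at this

lemma isOpen_agree [TopologicalSpace A] [DiscreteTopology A] (x : ℤ → A) (N : ℕ) :
    IsOpen {y : ℤ → A | ∀ i : ℤ, i.natAbs ≤ N → y i = x i} := by
  have he : {y : ℤ → A | ∀ i : ℤ, i.natAbs ≤ N → y i = x i}
      = ⋂ i ∈ Finset.Icc (-(N : ℤ)) (N : ℤ), {y : ℤ → A | y i = x i} := by
    ext y
    simp only [Set.mem_setOf_eq, Set.mem_iInter, Finset.mem_Icc]
    constructor
    · intro h i hi; exact h i (by omega)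
    · intro h i hi; exact h i (by omega)
  rw [he]
  refine isOpen_biInter_finset fun i _ => ?_
  have h2 : {y : ℤ → A | y i = x i} = (fun y : ℤ → A => y i) ⁻¹' {x i} := rfl
  rw [h2]
  exact (isOpen_discrete _).preimage (continuous_apply i)

lemma isOpen_occursAt [TopologicalSpace A] [DiscreteTopology A] (w : List A) (n : ℤ) :
    IsOpen {σ : ℤ → A | OccursAt w σ n} := by
  have he : {σ : ℤ → A | OccursAt w σ n}
      = ⋂ i : Fin w.length, {σ : ℤ → A | σ (n + (i : ℕ)) = w.get i} := by
    ext σ; simp [OccursAt, Set.mem_iInter]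
  rw [he]
  refine isOpen_iInter_of_finite fun i => ?_
  have h2 : {σ : ℤ → A | σ (n + (i:ℕ)) = w.get i}
      = (fun σ : ℤ → A => σ (n + (i:ℕ))) ⁻¹' {w.get i} := rfl
  rw [h2]
  exact (isOpen_discrete _).preimage (continuous_apply _)

lemma exists_cylinder_subset [TopologicalSpace A] [DiscreteTopology A]
    {x : ℤ → A} {V : Set (ℤ → A)} (hV : V ∈ nhds x) :
    ∃ N : ℕ, {y : ℤ → A | ∀ i : ℤ, i.natAbs ≤ N → y i = x i} ⊆ V := by
  rw [nhds_pi, Filter.mem_pi] at hV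
  obtain ⟨I, hIfin, t, ht, hsub⟩ := hV
  obtain ⟨N, hN⟩ : ∃ N : ℕ, ∀ i ∈ I, i.natAbs ≤ N := by
    obtain ⟨N, hNub⟩ := (hIfin.image Int.natAbs).bddAbove
    exact ⟨N, fun i hi => hNub (Set.mem_image_of_mem _ hi)⟩
  refine ⟨N, fun y hy => hsub fun i hi => ?_⟩
  rw [hy i (hN i hi)]
  exact mem_of_mem_nhds (ht i)

lemma uniform_cont [TopologicalSpace A] [DiscreteTopology A] [Finite A]
    {Ω : Set (ℤ → A)} (hclosed : IsClosed Ω) {B : Type*} [NormedAddCommGroup B]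
    {f : (ℤ → A) → B} (hf : ContinuousOn f Ω) {ε : ℝ} (hε : 0 < ε) :
    ∃ N : ℕ, ∀ x ∈ Ω, ∀ y ∈ Ω, (∀ i : ℤ, i.natAbs ≤ N → x i = y i) →
      ‖f x - f y‖ ≤ ε := by
  have hcpt : IsCompact Ω := hclosed.isCompact
  have key : ∀ x ∈ Ω, ∃ N : ℕ, ∀ y ∈ Ω,
      (∀ i : ℤ, i.natAbs ≤ N → y i = x i) → ‖f y - f x‖ ≤ ε / 2 := by
    intro x hx
    have hb : Metric.ball (f x) (ε / 2) ∈ nhds (f x) :=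
      Metric.ball_mem_nhds _ (by linarith)
    have hpre : f ⁻¹' Metric.ball (f x) (ε / 2) ∈ nhdsWithin x Ω := hf x hx hb
    rw [mem_nhdsWithin] at hpre
    obtain ⟨V, hVopen, hxV, hVsub⟩ := hpre
    obtain ⟨N, hN⟩ := exists_cylinder_subset (hVopen.mem_nhds hxV)
    refine ⟨N, fun y hy hagree => ?_⟩
    have hyV : y ∈ V := hN hagree
    have hd : dist (f y) (f x) < ε / 2 := Metric.mem_ball.mp (hVsub ⟨hyV, hy⟩)
    rw [← dist_eq_norm]
    linarith
  choose! N hN using key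
  have hcover : Ω ⊆ ⋃ x ∈ Ω, {y : ℤ → A | ∀ i : ℤ, i.natAbs ≤ N x → y i = x i} := by
    intro x hx
    exact Set.mem_biUnion hx (fun i _ => rfl)
  obtain ⟨s, hsΩ, hsfin, hscov⟩ :=
    hcpt.elim_finite_subcover_image (fun x _ => isOpen_agree x (N x)) hcover
  obtain ⟨M, hM⟩ : ∃ M : ℕ, ∀ x ∈ s, N x ≤ M := by
    obtain ⟨M, hMub⟩ := (hsfin.image N).bddAbove
    exact ⟨M, fun x hx => hMub (Set.mem_image_of_mem _ hx)⟩
  refine ⟨M, fun x hx y hy hagree => ?_⟩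
  obtain ⟨z, hz, hxz⟩ := Set.mem_iUnion₂.mp (hscov hx)
  have hxz' : ∀ i : ℤ, i.natAbs ≤ N z → x i = z i := hxz
  have hyz : ∀ i : ℤ, i.natAbs ≤ N z → y i = z i := fun i hi => by
    rw [← hagree i (le_trans hi (hM z hz))]
    exact hxz' i hi
  have h1 := hN z (hsΩ hz) x hx hxz'
  have h2 := hN z (hsΩ hz) y hy hyz
  calc ‖f x - f y‖ = ‖(f x - f z) - (f y - f z)‖ := by abel_nf
    _ ≤ ‖f x - f z‖ + ‖f y - f z‖ := norm_sub_le _ _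
    _ ≤ ε / 2 + ε / 2 := add_le_add h1 h2
    _ = ε := by ring

lemma exists_occ [TopologicalSpace A] [DiscreteTopology A] [Finite A]
    {Ω : Set (ℤ → A)} (hΩ : IsSubshift Ω) (hmin : IsMinimal Ω)
    {w : List A} (hw : w ∈ words Ω) {ω : ℤ → A} (hω : ω ∈ Ω) :
    ∃ k : ℕ, OccursAt w ω (k : ℤ) := by
  have hcpt : IsCompact Ω := hΩ.1.isCompact
  obtain ⟨ρ, hρ, m, hm⟩ := hw
  have hρ0 : shiftZ m ρ ∈ Ω := shiftZ_mem hΩ m hρ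
  have hocc0 : OccursAt w (shiftZ m ρ) 0 := by
    intro i
    have := hm i
    simpa [shiftZ, add_comm, add_left_comm, add_assoc] using this
  have hcover : Ω ⊆ ⋃ n : ℤ, {σ : ℤ → A | OccursAt w σ n} := by
    intro σ hσ
    have hcl : shiftZ m ρ ∈ closure {τ | ∃ n : ℤ, τ = shiftZ n σ} := hmin σ hσ hρ0
    obtain ⟨τ, hτU, hτorb⟩ := mem_closure_iff.mp hcl _ (isOpen_occursAt w 0) hocc0
    obtain ⟨n, rfl⟩ := hτorb
    refine Set.mem_iUnion.mpr ⟨n, fun i => ?_⟩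
    have := hτU i
    simpa [shiftZ, add_comm, add_left_comm, add_assoc] using this
  obtain ⟨t, ht⟩ := hcpt.elim_finite_subcover _ (fun n => isOpen_occursAt w n) hcover
  set Nb : ℕ := t.sup fun n => (-n).toNat with hNb
  have hσ : shiftZ (Nb : ℤ) ω ∈ Ω := shiftZ_mem hΩ _ hω
  obtain ⟨n, hnt, hocc⟩ := Set.mem_iUnion₂.mp (ht hσ)
  have hnN : 0 ≤ n + (Nb : ℤ) := by
    have h1 : (-n).toNat ≤ Nb := Finset.le_sup (f := fun n => (-n).toNat) hnt
    omega
  refine ⟨(n + (Nb : ℤ)).toNat, fun i => ?_⟩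
  have hocc' := hocc i
  simp only [shiftZ] at hocc'
  rw [← hocc']
  congr 1
  omega

end Aux


/-- on a minimal subshift, the functions `F_ω(w) = ∑_{j<|w|} f(T^{k_ω^w+j} ω)`
built from a continuous `f` are uniformly close to each other: for every `ε > 0` there is
`l` with `‖F_ω(w) - F_ρ(w)‖ ≤ ε|w|` whenever `|w| ≥ l`. -/
theorem birkhoffF_uniformly_close
    {A : Type*} [Fintype A] [Nonempty A] [TopologicalSpace A] [DiscreteTopology A]
    (Ω : Set (ℤ → A)) (hΩ : IsSubshift Ω) (hne : Ω.Nonempty) (hmin : IsMinimal Ω)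
    (B : Type*) [NormedAddCommGroup B] [NormedSpace ℝ B] [CompleteSpace B]
    (f : (ℤ → A) → B) (hf : ContinuousOn f Ω) :
    ∀ ε : ℝ, 0 < ε → ∃ l : ℕ, ∀ ω ∈ Ω, ∀ ρ ∈ Ω, ∀ w ∈ words Ω, l ≤ w.length →
      ‖birkhoffF f ω w - birkhoffF f ρ w‖ ≤ ε * (w.length : ℝ) := by
  intro ε hε
  have hcpt : IsCompact Ω := hΩ.1.isCompact
  obtain ⟨D0, hD0⟩ := hcpt.exists_bound_of_continuousOn hf
  set D := max D0 0 with hD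
  have hDnn : (0:ℝ) ≤ D := le_max_right _ _
  have hDb : ∀ x ∈ Ω, ‖f x‖ ≤ D := fun x hx => le_trans (hD0 x hx) (le_max_left _ _)
  obtain ⟨N, hN⟩ := uniform_cont hΩ.1 hf (half_pos hε)
  obtain ⟨l, hl⟩ := exists_nat_ge (4 * D * (N : ℝ) / (ε / 2))
  refine ⟨l, fun ω hω ρ hρ w hw hlw => ?_⟩
  set n := w.length with hn
  have hkω : OccursAt w ω ((firstOcc ω w : ℕ) : ℤ) :=
    Nat.sInf_mem (exists_occ hΩ hmin hw hω)
  have hkρ : OccursAt w ρ ((firstOcc ρ w : ℕ) : ℤ) :=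
    Nat.sInf_mem (exists_occ hΩ hmin hw hρ)
  set g : ℕ → B := fun j =>
    f (shiftZ ((firstOcc ω w : ℤ) + (j : ℤ)) ω) -
      f (shiftZ ((firstOcc ρ w : ℤ) + (j : ℤ)) ρ) with hg
  have hmemω : ∀ j : ℕ, shiftZ ((firstOcc ω w : ℤ) + (j : ℤ)) ω ∈ Ω :=
    fun j => shiftZ_mem hΩ _ hω
  have hmemρ : ∀ j : ℕ, shiftZ ((firstOcc ρ w : ℤ) + (j : ℤ)) ρ ∈ Ω :=
    fun j => shiftZ_mem hΩ _ hρ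
  have hnorm : ‖birkhoffF f ω w - birkhoffF f ρ w‖ ≤ ∑ j ∈ Finset.range n, ‖g j‖ := by
    rw [birkhoffF, birkhoffF, ← Finset.sum_sub_distrib]
    exact norm_sum_le _ _
  have hgood : ∀ j : ℕ, N ≤ j → j + N + 1 ≤ n → ‖g j‖ ≤ ε / 2 := by
    intro j hj1 hj2
    refine hN _ (hmemω j) _ (hmemρ j) ?_
    intro i hi
    have hp0 : (0:ℤ) ≤ (j : ℤ) + i := by omega
    set p := ((j : ℤ) + i).toNat with hpdef
    have hpz : (p : ℤ) = (j : ℤ) + i := Int.toNat_of_nonneg hp0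
    have hpn : p < n := by omega
    have e1 : shiftZ ((firstOcc ω w : ℤ) + (j : ℤ)) ω i
        = ω ((firstOcc ω w : ℤ) + (p : ℤ)) := by
      simp only [shiftZ]; congr 1; omega
    have e2 : shiftZ ((firstOcc ρ w : ℤ) + (j : ℤ)) ρ i
        = ρ ((firstOcc ρ w : ℤ) + (p : ℤ)) := by
      simp only [shiftZ]; congr 1; omega
    rw [e1, e2, hkω ⟨p, hpn⟩, hkρ ⟨p, hpn⟩]
  have hbad : ∀ j : ℕ, ‖g j‖ ≤ 2 * D := by
    intro j
    calc ‖g j‖ ≤ ‖f (shiftZ ((firstOcc ω w : ℤ) + (j : ℤ)) ω)‖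
          + ‖f (shiftZ ((firstOcc ρ w : ℤ) + (j : ℤ)) ρ)‖ := norm_sub_le _ _
      _ ≤ D + D := add_le_add (hDb _ (hmemω j)) (hDb _ (hmemρ j))
      _ = 2 * D := by ring
  classical
  have hsplit : ∑ j ∈ Finset.range n, ‖g j‖ ≤ ε / 2 * n + 2 * D * (2 * N) := by
    rw [← Finset.sum_filter_add_sum_filter_not (Finset.range n)
      (fun j => N ≤ j ∧ j + N + 1 ≤ n)]
    have h1 : ∑ j ∈ (Finset.range n).filter (fun j => N ≤ j ∧ j + N + 1 ≤ n), ‖g j‖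
        ≤ ε / 2 * n := by
      calc ∑ j ∈ (Finset.range n).filter (fun j => N ≤ j ∧ j + N + 1 ≤ n), ‖g j‖
          ≤ ∑ _j ∈ (Finset.range n).filter (fun j => N ≤ j ∧ j + N + 1 ≤ n), (ε / 2) := by
            refine Finset.sum_le_sum fun j hj => ?_
            rw [Finset.mem_filter] at hj
            exact hgood j hj.2.1 hj.2.2
        _ = ((Finset.range n).filter (fun j => N ≤ j ∧ j + N + 1 ≤ n)).card * (ε / 2) := by
            rw [Finset.sum_const, nsmul_eq_mul]
        _ ≤ n * (ε / 2) := by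
            have := Finset.card_filter_le (Finset.range n) (fun j => N ≤ j ∧ j + N + 1 ≤ n)
            have hc : (((Finset.range n).filter
              (fun j => N ≤ j ∧ j + N + 1 ≤ n)).card : ℝ) ≤ (n : ℝ) := by
              exact_mod_cast le_trans this (le_of_eq (Finset.card_range n))
            exact mul_le_mul_of_nonneg_right hc (by linarith)
        _ = ε / 2 * n := by ring
    have h2 : ∑ j ∈ (Finset.range n).filter (fun j => ¬(N ≤ j ∧ j + N + 1 ≤ n)), ‖g j‖
        ≤ 2 * D * (2 * N) := by
      have hsub : (Finset.range n).filter (fun j => ¬(N ≤ j ∧ j + N + 1 ≤ n))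
          ⊆ Finset.range N ∪ Finset.Ico (n - N) n := by
        intro j hj
        simp only [Finset.mem_filter, Finset.mem_range, Finset.mem_union,
          Finset.mem_Ico] at *
        omega
      have hcard : ((Finset.range N ∪ Finset.Ico (n - N) n).card : ℝ) ≤ 2 * N := by
        have h := Finset.card_union_le (Finset.range N) (Finset.Ico (n - N) n)
        have : (Finset.range N ∪ Finset.Ico (n - N) n).card ≤ 2 * N := by
          simp only [Finset.card_range, Nat.card_Ico] at h ⊢
          omega
        exact_mod_cast this
      calc ∑ j ∈ (Finset.range n).filter (fun j => ¬(N ≤ j ∧ j + N + 1 ≤ n)), ‖g j‖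
          ≤ ∑ j ∈ Finset.range N ∪ Finset.Ico (n - N) n, ‖g j‖ :=
            Finset.sum_le_sum_of_subset_of_nonneg hsub (fun _ _ _ => norm_nonneg _)
        _ ≤ ∑ _j ∈ Finset.range N ∪ Finset.Ico (n - N) n, (2 * D) :=
            Finset.sum_le_sum fun j _ => hbad j
        _ = ((Finset.range N ∪ Finset.Ico (n - N) n).card : ℝ) * (2 * D) := by
            rw [Finset.sum_const, nsmul_eq_mul]
        _ ≤ (2 * N) * (2 * D) := mul_le_mul_of_nonneg_right hcard (by linarith)
        _ = 2 * D * (2 * N) := by ring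
    linarith
  have hln : (l : ℝ) ≤ (n : ℝ) := by exact_mod_cast hlw
  have h4 : 4 * D * (N : ℝ) ≤ ε / 2 * n := by
    have h1 : 4 * D * (N : ℝ) ≤ ε / 2 * l := by
      have := (div_le_iff₀ (half_pos hε)).mp hl
      linarith
    have h2 : ε / 2 * l ≤ ε / 2 * n := mul_le_mul_of_nonneg_left hln (by linarith)
    linarith
  have : ‖birkhoffF f ω w - birkhoffF f ρ w‖ ≤ ε / 2 * n + 2 * D * (2 * N) :=
    le_trans hnorm hsplit
  have hfin : ε / 2 * n + 2 * D * (2 * (N:ℝ)) ≤ ε * n := by linarith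
  calc ‖birkhoffF f ω w - birkhoffF f ρ w‖ ≤ ε / 2 * n + 2 * D * (2 * N) := this
    _ ≤ ε * n := hfin


end SubshiftErgodic
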